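/- For all integers n, m ∈ ℤ, the integral ∫_ℝ a_n(t) · conj(a_m(t)) dt equals π if n = m and equals 0 if n ≠ m. In particular each a_n lies in L²(ℝ, ℂ) and the family {a_n/√π}_{n ∈ ℤ} is orthonormal in L²(ℝ, ℂ). -/

import Mathlib

open MeasureTheory

section Aux
open Complex Filter

private lemma sub_I_ne' (t : ℝ) : (t : ℂ) - Complex.I ≠ 0 := by
  intro h; have := congrArg Complex.im h; simp at this

private lemma add_I_ne' (t : ℝ) : (t : ℂ) + Complex.I ≠ 0 := by
  intro h; have := congrArg Complex.im h; simp at this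

private lemma norm_sub_I' (t : ℝ) : ‖(t : ℂ) - Complex.I‖ = Real.sqrt (1 + t^2) := by
  rw [Complex.norm_def, Complex.normSq_apply]; simp; ring_nf

private lemma norm_add_I' (t : ℝ) : ‖(t : ℂ) + Complex.I‖ = Real.sqrt (1 + t^2) := by
  rw [Complex.norm_def, Complex.normSq_apply]; simp; ring_nf

private lemma norm_mix' (t : ℝ) (j l : ℤ) :
    ‖((t : ℂ) - Complex.I) ^ j * ((t : ℂ) + Complex.I) ^ l‖
      = Real.sqrt (1 + t^2) ^ (j + l) := by
  have hr : Real.sqrt (1 + t^2) ≠ 0 := by positivity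
  rw [norm_mul, norm_zpow, norm_zpow, norm_sub_I', norm_add_I', ← zpow_add₀ hr]

private lemma sqrt_neg_two' (t : ℝ) : Real.sqrt (1 + t^2) ^ (-2 : ℤ) = (1 + t^2)⁻¹ := by
  have h : (0:ℝ) ≤ 1 + t^2 := by positivity
  rw [zpow_neg]; norm_num; exact Real.sq_sqrt h

private lemma cont_mix' (j l : ℤ) :
    Continuous (fun t : ℝ => ((t : ℂ) - Complex.I) ^ j * ((t : ℂ) + Complex.I) ^ l) := by
  apply Continuous.mul
  · exact (Complex.continuous_ofReal.sub continuous_const).zpow₀ j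
      (fun t => Or.inl (sub_I_ne' t))
  · exact (Complex.continuous_ofReal.add continuous_const).zpow₀ l
      (fun t => Or.inl (add_I_ne' t))

private lemma integrable_mix' (j l : ℤ) (hjl : j + l = -2) :
    Integrable (fun t : ℝ => ((t : ℂ) - Complex.I) ^ j * ((t : ℂ) + Complex.I) ^ l) := by
  apply Integrable.mono' integrable_inv_one_add_sq (cont_mix' j l).aestronglyMeasurable
  filter_upwards with t
  rw [norm_mix', hjl, sqrt_neg_two']

private lemma memLp_a' (n : ℤ) :
    MemLp (fun t : ℝ => ((t : ℂ) - Complex.I) ^ n / ((t : ℂ) + Complex.I) ^ (n + 1)) 2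
      (volume : Measure ℝ) := by
  have heq : (fun t : ℝ => ((t : ℂ) - Complex.I) ^ n / ((t : ℂ) + Complex.I) ^ (n + 1))
      = fun t : ℝ => ((t : ℂ) - Complex.I) ^ n * ((t : ℂ) + Complex.I) ^ (-(n + 1)) := by
    funext t; rw [div_eq_mul_inv, zpow_neg]
  rw [heq, memLp_two_iff_integrable_sq_norm (cont_mix' n (-(n+1))).aestronglyMeasurable]
  apply Integrable.mono' integrable_inv_one_add_sq
    ((cont_mix' n (-(n+1))).norm.pow 2).aestronglyMeasurable
  filter_upwards with t
  simp only [Pi.pow_apply]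
  rw [Real.norm_eq_abs, _root_.abs_of_nonneg (by positivity), norm_mix',
    ← zpow_natCast (n := 2), ← zpow_mul,
    show (n + -(n+1)) * ((2:ℕ):ℤ) = -2 by push_cast; ring, sqrt_neg_two']

private lemma prod_formula' (n m : ℤ) (t : ℝ) :
    (((t : ℂ) - Complex.I) ^ n / ((t : ℂ) + Complex.I) ^ (n + 1)) *
      (starRingEnd ℂ) (((t : ℂ) - Complex.I) ^ m / ((t : ℂ) + Complex.I) ^ (m + 1))
      = ((t : ℂ) - Complex.I) ^ (n - m - 1) * ((t : ℂ) + Complex.I) ^ (m - n - 1) := by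
  have h1 := sub_I_ne' t
  have h2 := add_I_ne' t
  have hc : (starRingEnd ℂ) (((t : ℂ) - Complex.I) ^ m / ((t : ℂ) + Complex.I) ^ (m + 1))
      = ((t : ℂ) + Complex.I) ^ m / ((t : ℂ) - Complex.I) ^ (m + 1) := by
    simp [map_div₀, map_zpow₀, Complex.conj_ofReal, ← sub_eq_add_neg]
  rw [hc, div_mul_div_comm, sub_sub, sub_sub, zpow_sub₀ h1, zpow_sub₀ h2,
    div_mul_div_comm, mul_comm (((t:ℂ) + Complex.I) ^ (n+1))]

private lemma int_diag' : (∫ t : ℝ, ((t:ℂ) - Complex.I)^(-1:ℤ) * ((t:ℂ) + Complex.I)^(-1:ℤ))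
    = (Real.pi : ℂ) := by
  have key : ∀ t : ℝ, ((t:ℂ) - Complex.I)^(-1:ℤ) * ((t:ℂ) + Complex.I)^(-1:ℤ)
      = ((((1 + t^2)⁻¹ : ℝ)) : ℂ) := by
    intro t
    rw [zpow_neg_one, zpow_neg_one, ← mul_inv]
    have : ((t:ℂ) - Complex.I) * ((t:ℂ) + Complex.I) = (((1 + t^2 : ℝ)) : ℂ) := by
      push_cast
      ring_nf
      rw [Complex.I_sq]
      ring
    rw [this]
    push_cast
    ring
  simp_rw [key]
  have h : (∫ t : ℝ, ((((1 + t^2)⁻¹ : ℝ)) : ℂ)) = ((∫ t : ℝ, (1 + t^2)⁻¹ : ℝ) : ℂ) :=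
    integral_ofReal
  rw [h, integral_univ_inv_one_add_sq]

private lemma deriv_key' (k : ℤ) (hk : k ≠ 0) (t : ℝ) :
    HasDerivAt (fun s : ℝ => (2 * Complex.I * k)⁻¹ *
        (((s:ℂ) - Complex.I) / ((s:ℂ) + Complex.I))^k)
      (((t:ℂ) - Complex.I)^(k-1) * ((t:ℂ) + Complex.I)^(-k-1)) t := by
  have h1 := sub_I_ne' t
  have h2 := add_I_ne' t
  have hu : HasDerivAt (fun z : ℂ => (z - Complex.I) / (z + Complex.I))
      ((1 * ((t:ℂ) + Complex.I) - ((t:ℂ) - Complex.I) * 1) / ((t:ℂ) + Complex.I)^2) ((t:ℝ):ℂ) :=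
    ((hasDerivAt_id _).sub_const _).div ((hasDerivAt_id _).add_const _) h2
  have hzp := (hasDerivAt_zpow k (((t:ℂ) - Complex.I) / ((t:ℂ) + Complex.I))
      (Or.inl (div_ne_zero h1 h2))).comp ((t:ℝ):ℂ) hu
  have hC := (hzp.const_mul ((2 * Complex.I * k)⁻¹)).comp_ofReal
  convert hC using 1
  · rfl
  have hkC : (k : ℂ) ≠ 0 := Int.cast_ne_zero.mpr hk
  have e1 : (1 * ((t:ℂ) + Complex.I) - ((t:ℂ) - Complex.I) * 1) = 2 * Complex.I := by ring
  have e2 : (((t:ℂ) - Complex.I) / ((t:ℂ) + Complex.I))^(k-1)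
      = ((t:ℂ) - Complex.I)^(k-1) * (((t:ℂ) + Complex.I)^(k-1))⁻¹ := by
    rw [div_zpow, div_eq_mul_inv]
  have e3 : ((t:ℂ) + Complex.I)^(-k-1)
      = ((((t:ℂ) + Complex.I)^(k-1)) * ((t:ℂ) + Complex.I)^(2:ℕ))⁻¹ := by
    rw [← zpow_natCast (((t:ℂ) + Complex.I)) 2, ← zpow_add₀ h2, ← zpow_neg]
    congr 1
    push_cast
    ring
  rw [e1, e2, e3]
  have hB : (((t:ℂ) + Complex.I)^(k-1)) ≠ 0 := zpow_ne_zero _ h2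
  have hCne : (((t:ℂ) + Complex.I)^(2:ℕ)) ≠ 0 := pow_ne_zero _ h2
  field_simp

private lemma tendsto_inv_add_I' (l : Filter ℝ) (hl : Tendsto (fun t : ℝ => t^2) l atTop) :
    Tendsto (fun t : ℝ => ((t:ℂ) + Complex.I)⁻¹) l (nhds 0) := by
  rw [tendsto_zero_iff_norm_tendsto_zero]
  simp_rw [norm_inv, norm_add_I']
  apply Tendsto.inv_tendsto_atTop
  have hsq : Tendsto Real.sqrt atTop atTop :=
    tendsto_atTop_atTop_of_monotone (fun a b h => Real.sqrt_le_sqrt h)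
      (fun b => ⟨max b 0 ^ 2, by rw [Real.sqrt_sq (le_max_right b 0)]; exact le_max_left b 0⟩)
  exact hsq.comp (tendsto_atTop_add_const_left _ 1 hl)

private lemma tendsto_F' (k : ℤ) (l : Filter ℝ) (hl : Tendsto (fun t : ℝ => t^2) l atTop) :
    Tendsto (fun t : ℝ => (2 * Complex.I * k)⁻¹ *
        (((t:ℂ) - Complex.I) / ((t:ℂ) + Complex.I))^k)
      l (nhds ((2 * Complex.I * k)⁻¹)) := by
  have hu : Tendsto (fun t : ℝ => ((t:ℂ) - Complex.I) / ((t:ℂ) + Complex.I)) l (nhds 1) := by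
    have key : ∀ t : ℝ, ((t:ℂ) - Complex.I) / ((t:ℂ) + Complex.I)
        = 1 - 2 * Complex.I * ((t:ℂ) + Complex.I)⁻¹ := by
      intro t
      have h2 := add_I_ne' t
      field_simp
      ring
    simp_rw [key]
    have := ((tendsto_inv_add_I' l hl).const_mul (2 * Complex.I)).const_sub 1
    simpa using this
  have hz : Tendsto (fun t : ℝ => (((t:ℂ) - Complex.I) / ((t:ℂ) + Complex.I))^k) l (nhds 1) := by
    have hc : ContinuousAt (fun z : ℂ => z^k) 1 := continuousAt_zpow₀ 1 k (Or.inl one_ne_zero)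
    have := hc.tendsto.comp hu
    simpa [Function.comp_def] using this
  simpa using hz.const_mul ((2 * Complex.I * (k:ℂ))⁻¹)

private lemma int_offdiag' (k : ℤ) (hk : k ≠ 0) :
    (∫ t : ℝ, ((t:ℂ) - Complex.I)^(k-1) * ((t:ℂ) + Complex.I)^(-k-1)) = 0 := by
  have htop : Tendsto (fun t : ℝ => t^2) atTop atTop :=
    tendsto_pow_atTop (n := 2) (by norm_num)
  have hbot : Tendsto (fun t : ℝ => t^2) atBot atTop := by
    have := (tendsto_pow_atTop (n := 2) (α := ℝ) (by norm_num)).comp tendsto_neg_atBot_atTop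
    refine this.congr (fun t => by simp [Function.comp])
  have := integral_of_hasDerivAt_of_tendsto (deriv_key' k hk)
    (integrable_mix' (k-1) (-k-1) (by ring))
    (tendsto_F' k atBot hbot) (tendsto_F' k atTop htop)
  simpa using this

end Aux

theorem stmt_4 (a : ℤ → ℝ → ℂ)
    (ha : ∀ (n : ℤ) (t : ℝ),
      a n t = ((t : ℂ) - Complex.I) ^ n / ((t : ℂ) + Complex.I) ^ (n + 1)) :
    ∃ h : ∀ n : ℤ, MemLp (a n) 2 (volume : Measure ℝ),
      (∀ n m : ℤ,
        (∫ t : ℝ, a n t * (starRingEnd ℂ) (a m t))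
          = if n = m then (Real.pi : ℂ) else 0) ∧
      Orthonormal ℂ (fun n : ℤ =>
        ((Real.sqrt Real.pi : ℂ))⁻¹ • ((h n).toLp (a n))) := by
  have h : ∀ n : ℤ, MemLp (a n) 2 (volume : Measure ℝ) := by
    intro n
    have : a n = fun t : ℝ => ((t : ℂ) - Complex.I) ^ n / ((t : ℂ) + Complex.I) ^ (n + 1) :=
      funext (ha n)
    rw [this]
    exact memLp_a' n
  have hint : ∀ n m : ℤ,
      (∫ t : ℝ, a n t * (starRingEnd ℂ) (a m t)) = if n = m then (Real.pi : ℂ) else 0 := by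
    intro n m
    have key : ∀ t : ℝ, a n t * (starRingEnd ℂ) (a m t)
        = ((t : ℂ) - Complex.I) ^ (n - m - 1) * ((t : ℂ) + Complex.I) ^ (m - n - 1) := by
      intro t
      rw [ha n t, ha m t]
      exact prod_formula' n m t
    simp_rw [key]
    by_cases hnm : n = m
    · subst hnm
      rw [if_pos rfl, show n - n - 1 = (-1 : ℤ) by ring]
      exact int_diag'
    · rw [if_neg hnm, show n - m - 1 = (n - m) - 1 by ring,
        show m - n - 1 = -(n - m) - 1 by ring]
      exact int_offdiag' (n - m) (sub_ne_zero.mpr hnm)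
  refine ⟨h, hint, ?_⟩
  rw [orthonormal_iff_ite]
  intro n m
  rw [inner_smul_left, inner_smul_right]
  have hinner : (inner ℂ ((h n).toLp (a n)) ((h m).toLp (a m)) : ℂ)
      = ∫ t : ℝ, a m t * (starRingEnd ℂ) (a n t) := by
    rw [MeasureTheory.L2.inner_def]
    apply integral_congr_ae
    filter_upwards [(h n).coeFn_toLp, (h m).coeFn_toLp] with t h1 h2
    rw [h1, h2, RCLike.inner_apply, mul_comm]
  rw [hinner, hint m n]
  have hpi : Real.sqrt Real.pi ≠ 0 := by positivity
  have hconj : (starRingEnd ℂ) (((Real.sqrt Real.pi : ℝ) : ℂ))⁻¹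
      = (((Real.sqrt Real.pi : ℝ) : ℂ))⁻¹ := by
    rw [map_inv₀, Complex.conj_ofReal]
  rw [hconj]
  by_cases hnm : n = m
  · subst hnm
    rw [if_pos rfl, if_pos rfl]
    rw [← Complex.ofReal_inv, ← Complex.ofReal_mul, ← Complex.ofReal_mul]
    norm_cast
    rw [← mul_assoc, ← mul_inv, Real.mul_self_sqrt Real.pi_pos.le,
      inv_mul_cancel₀ Real.pi_ne_zero]
  · rw [if_neg (fun hh => hnm hh.symm), if_neg hnm, mul_zero, mul_zero]
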